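/- (Lemma 2, composition of blindness under global POVMs.) Fix d ≥ 1 and L ≥ 1, and for each l : Fin L let ρ_l : ZMod 8 → Matrix (Fin d) (Fin d) ℂ be a family of positive semidefinite matrices. Assume that for each l each single system is blind: for every POVM Π : Fin m → Matrix (Fin d) (Fin d) ℂ, every θ, φ : ZMod 8 and every i with nonzero denominator, [Σ_{r : ZMod 2} Tr(Π i · ρ_l(φ−θ−4r))] / [Σ_{θ'} Σ_r Tr(Π i · ρ_l(φ−θ'−4r))] = 1/8. Then the joint system is blind: for every POVM Π : Fin m → Matrix ((Fin L → Fin d)) ((Fin L → Fin d)) ℂ on the tensor-product space, every θ, φ : Fin L → ZMod 8 and every j with nonzero denominator, [Σ_{r : Fin L → ZMod 2} Tr(Π j · ⊗_{l} ρ_l(φ l − θ l − 4·(r l)))] / [Σ_{θ' : Fin L → ZMod 8} Σ_{r} Tr(Π j · ⊗_{l} ρ_l(φ l − θ' l − 4·(r l)))] = 1/8^L. -/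

import Mathlib

open Matrix
open scoped ComplexOrder

noncomputable section

/-- `4·r`: the map `ZMod 2 → ZMod 8` sending `0 ↦ 0`, `1 ↦ 4` -/
def pad (r : ZMod 2) : ZMod 8 := 4 * (r.val : ZMod 8)

/-- tensor product of a family of `d × d` matrices: the matrix indexed by functions
`x y : Fin L → Fin d` with entries `∏ l, M l (x l) (y l)` -/
def tensorPow {d L : ℕ} (M : Fin L → Matrix (Fin d) (Fin d) ℂ) :
    Matrix (Fin L → Fin d) (Fin L → Fin d) ℂ :=
  Matrix.of fun x y => ∏ l, M l (x l) (y l)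



lemma psd_diag_nonneg {n : Type*} [Fintype n] [DecidableEq n] {M : Matrix n n ℂ}
    (hM : M.PosSemidef) (i : n) : 0 ≤ M i i := by
  exact hM.diag_nonneg

lemma psd_trace_nonneg {n : Type*} [Fintype n] [DecidableEq n] {M : Matrix n n ℂ}
    (hM : M.PosSemidef) : 0 ≤ M.trace :=
  Finset.sum_nonneg fun i _ => psd_diag_nonneg hM i

open scoped MatrixOrder in
lemma posSemidef_iff_eq_transpose_mul_self {n : Type*} [Fintype n] [DecidableEq n]
    {A : Matrix n n ℂ} : A.PosSemidef ↔ ∃ B : Matrix n n ℂ, A = Bᴴ * B := by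
  constructor
  · intro hA
    have h0 : 0 ≤ A := Matrix.nonneg_iff_posSemidef.mpr hA
    refine ⟨CFC.sqrt A, ?_⟩
    rw [← star_eq_conjTranspose, (CFC.sqrt_nonneg A).star_eq, CFC.sqrt_mul_sqrt_self A h0]
  · rintro ⟨B, rfl⟩
    exact posSemidef_conjTranspose_mul_self B

lemma trace_mul_nonneg {n : Type*} [Fintype n] [DecidableEq n] {A B : Matrix n n ℂ}
    (hA : A.PosSemidef) (hB : B.PosSemidef) : 0 ≤ (A * B).trace := by
  obtain ⟨C, rfl⟩ := posSemidef_iff_eq_transpose_mul_self.mp hB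
  rw [← Matrix.mul_assoc, trace_mul_cycle]
  exact psd_trace_nonneg (hA.mul_mul_conjTranspose_same C)

lemma psd_smul {n : Type*} [Fintype n] {c : ℂ} (hc : 0 ≤ c) {A : Matrix n n ℂ}
    (hA : A.PosSemidef) : (c • A).PosSemidef := by
  have hsc : star c = c := by
    rw [Complex.le_def] at hc
    simp [Complex.ext_iff, Complex.star_def, ← hc.2]
  refine Matrix.PosSemidef.of_dotProduct_mulVec_nonneg ?_ fun x => ?_
  · unfold Matrix.IsHermitian
    rw [conjTranspose_smul, hsc, hA.1.eq]
  · rw [smul_mulVec, dotProduct_smul, smul_eq_mul]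
    exact mul_nonneg hc (hA.dotProduct_mulVec_nonneg x)

/-- factorize a sum over functions of a product over `univ.erase l0` -/
lemma sum_prod_erase {d L : ℕ} (l0 : Fin L) (F : Fin L → Fin d → ℂ) :
    ∑ w : Fin L → Fin d, ∏ l ∈ Finset.univ.erase l0, F l (w l)
      = (d : ℂ) * ∏ l ∈ Finset.univ.erase l0, ∑ a, F l a := by
  set F' : Fin L → Fin d → ℂ := Function.update F l0 (fun _ => 1) with hF'
  have h1 : ∀ w : Fin L → Fin d, ∏ l ∈ Finset.univ.erase l0, F l (w l)
      = ∏ l, F' l (w l) := by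
    intro w
    rw [← Finset.mul_prod_erase Finset.univ (fun l => F' l (w l)) (Finset.mem_univ l0)]
    have : F' l0 (w l0) = 1 := by simp [hF']
    rw [this, one_mul]
    exact Finset.prod_congr rfl fun l hl =>
      by rw [hF', Function.update_of_ne (Finset.ne_of_mem_erase hl)]
  calc ∑ w : Fin L → Fin d, ∏ l ∈ Finset.univ.erase l0, F l (w l)
      = ∑ w : Fin L → Fin d, ∏ l, F' l (w l) := Finset.sum_congr rfl fun w _ => h1 w
    _ = ∏ l, ∑ a, F' l a := by
        rw [Finset.prod_univ_sum]
        simp [Fintype.piFinset_univ]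
    _ = (d : ℂ) * ∏ l ∈ Finset.univ.erase l0, ∑ a, F l a := by
        rw [← Finset.mul_prod_erase Finset.univ (fun l => ∑ a, F' l a) (Finset.mem_univ l0)]
        have : ∑ a, F' l0 a = (d : ℂ) := by simp [hF']
        rw [this]
        congr 1
        exact Finset.prod_congr rfl fun l hl => by
          rw [hF']
          exact Finset.sum_congr rfl fun a _ => by
            rw [Function.update_of_ne (Finset.ne_of_mem_erase hl)]



def contract {d L : ℕ} (P : Matrix (Fin L → Fin d) (Fin L → Fin d) ℂ)
    (N : Fin L → Matrix (Fin d) (Fin d) ℂ) (l0 : Fin L) : Matrix (Fin d) (Fin d) ℂ :=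
  Matrix.of fun a b => ∑ x : Fin L → Fin d, ∑ y : Fin L → Fin d,
    P (Function.update x l0 a) (Function.update y l0 b)
      * ∏ l ∈ Finset.univ.erase l0, N l (y l) (x l)

lemma trace_mul_fml {n : Type*} [Fintype n] (A B : Matrix n n ℂ) :
    (A * B).trace = ∑ x, ∑ y, A x y * B y x := by
  simp [Matrix.trace, Matrix.mul_apply, Matrix.diag]

lemma tensorPow_sum {d L : ℕ} {ι : Type*} [Fintype ι]
    (f : Fin L → ι → Matrix (Fin d) (Fin d) ℂ) :
    ∑ r : Fin L → ι, tensorPow (fun l => f l (r l)) = tensorPow (fun l => ∑ s, f l s) := by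
  ext x y
  simp only [Matrix.sum_apply, tensorPow, Matrix.of_apply]
  rw [Finset.prod_univ_sum]
  rw [Fintype.piFinset_univ]

lemma tensorPow_one {d L : ℕ} : tensorPow (fun _ : Fin L => (1 : Matrix (Fin d) (Fin d) ℂ)) = 1 := by
  ext x y
  by_cases h : x = y
  · subst h; simp [tensorPow]
  · have : ∃ l, x l ≠ y l := by
      by_contra hc
      push_neg at hc
      exact h (funext hc)
    obtain ⟨l, hl⟩ := this
    simp only [tensorPow, Matrix.of_apply, Matrix.one_apply, h, if_false]
    exact Finset.prod_eq_zero (Finset.mem_univ l) (by simp [Matrix.one_apply, hl])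

lemma sum_update {d L : ℕ} (l0 : Fin L) (g : (Fin L → Fin d) → ℂ) :
    ∑ a : Fin d, ∑ x : Fin L → Fin d, g (Function.update x l0 a) = (d : ℂ) * ∑ x, g x := by
  have hbij : Function.Bijective
      (fun p : Fin d × (Fin L → Fin d) => ((p.2 l0, Function.update p.2 l0 p.1) :
        Fin d × (Fin L → Fin d))) := by
    rw [Function.bijective_iff_has_inverse]
    refine ⟨fun q => (q.2 l0, Function.update q.2 l0 q.1), fun p => ?_, fun q => ?_⟩ <;>
      simp [Function.update_idem]
  have := Fintype.sum_bijective _ hbij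
    (fun p : Fin d × (Fin L → Fin d) => g (Function.update p.2 l0 p.1))
    (fun q : Fin d × (Fin L → Fin d) => g q.2) (fun p => rfl)
  rw [Fintype.sum_prod_type] at this
  rw [this, Fintype.sum_prod_type]
  simp [Finset.sum_const, Finset.card_univ, mul_comm]

lemma trace_contract_mul {d L : ℕ} (P : Matrix (Fin L → Fin d) (Fin L → Fin d) ℂ)
    (N : Fin L → Matrix (Fin d) (Fin d) ℂ) (l0 : Fin L) (M : Matrix (Fin d) (Fin d) ℂ) :
    (contract P N l0 * M).trace
      = (d : ℂ) ^ 2 * (P * tensorPow (Function.update N l0 M)).trace := by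
  set h : (Fin L → Fin d) → (Fin L → Fin d) → ℂ := fun x' y' =>
    P x' y' * ∏ l, (Function.update N l0 M) l (y' l) (x' l) with hh
  have key : ∀ (a b : Fin d) (x y : Fin L → Fin d),
      (P (Function.update x l0 a) (Function.update y l0 b)
        * ∏ l ∈ Finset.univ.erase l0, N l (y l) (x l)) * M b a
      = h (Function.update x l0 a) (Function.update y l0 b) := by
    intro a b x y
    rw [hh]
    dsimp only
    rw [← Finset.mul_prod_erase Finset.univ
      (fun l => (Function.update N l0 M) l ((Function.update y l0 b) l)
        ((Function.update x l0 a) l)) (Finset.mem_univ l0)]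
    simp only [Function.update_self]
    have hprod : ∏ l ∈ Finset.univ.erase l0,
        (Function.update N l0 M) l ((Function.update y l0 b) l) ((Function.update x l0 a) l)
        = ∏ l ∈ Finset.univ.erase l0, N l (y l) (x l) :=
      Finset.prod_congr rfl fun l hl => by
        have hne := Finset.ne_of_mem_erase hl
        rw [Function.update_of_ne hne, Function.update_of_ne hne, Function.update_of_ne hne]
    rw [hprod]
    ring
  calc (contract P N l0 * M).trace
      = ∑ a, ∑ b, (∑ x : Fin L → Fin d, ∑ y : Fin L → Fin d,
          P (Function.update x l0 a) (Function.update y l0 b)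
            * ∏ l ∈ Finset.univ.erase l0, N l (y l) (x l)) * M b a := by
        rw [trace_mul_fml]; rfl
    _ = ∑ a, ∑ b, ∑ x : Fin L → Fin d, ∑ y : Fin L → Fin d,
          h (Function.update x l0 a) (Function.update y l0 b) := by
        refine Finset.sum_congr rfl fun a _ => Finset.sum_congr rfl fun b _ => ?_
        rw [Finset.sum_mul]
        refine Finset.sum_congr rfl fun x _ => ?_
        rw [Finset.sum_mul]
        exact Finset.sum_congr rfl fun y _ => key a b x y
    _ = ∑ a, ∑ x : Fin L → Fin d, ∑ b, ∑ y : Fin L → Fin d,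
          h (Function.update x l0 a) (Function.update y l0 b) := by
        exact Finset.sum_congr rfl fun a _ => Finset.sum_comm
    _ = ∑ a, ∑ x : Fin L → Fin d, (d : ℂ) * ∑ y' : Fin L → Fin d,
          h (Function.update x l0 a) y' := by
        refine Finset.sum_congr rfl fun a _ => Finset.sum_congr rfl fun x _ => ?_
        exact sum_update l0 (fun y' => h (Function.update x l0 a) y')
    _ = (d : ℂ) * ∑ a, ∑ x : Fin L → Fin d, ∑ y' : Fin L → Fin d,
          h (Function.update x l0 a) y' := by
        rw [Finset.mul_sum]
        refine Finset.sum_congr rfl fun a _ => ?_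
        rw [Finset.mul_sum]
    _ = (d : ℂ) * ∑ y' : Fin L → Fin d, ∑ a, ∑ x : Fin L → Fin d,
          h (Function.update x l0 a) y' := by
        congr 1
        rw [Finset.sum_congr rfl (fun a (_ : a ∈ Finset.univ) =>
          (Finset.sum_comm : (∑ x : Fin L → Fin d, ∑ y' : Fin L → Fin d,
            h (Function.update x l0 a) y') = _))]
        exact Finset.sum_comm
    _ = (d : ℂ) * ∑ y' : Fin L → Fin d, (d : ℂ) * ∑ x' : Fin L → Fin d, h x' y' := by
        congr 1
        exact Finset.sum_congr rfl fun y' _ => sum_update l0 (fun x' => h x' y')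
    _ = (d : ℂ) ^ 2 * ∑ x' : Fin L → Fin d, ∑ y' : Fin L → Fin d, h x' y' := by
        rw [← Finset.mul_sum, Finset.sum_comm]
        ring
    _ = (d : ℂ) ^ 2 * (P * tensorPow (Function.update N l0 M)).trace := by
        rw [trace_mul_fml]; rfl

lemma vecMulVec_star_psd {n : Type*} [Fintype n] [DecidableEq n] (c : n → ℂ) :
    (vecMulVec c (star c)).PosSemidef := by
  rw [vecMulVec_eq Unit, ← conjTranspose_replicateCol]
  exact posSemidef_self_mul_conjTranspose _

lemma quad_eq_trace {n : Type*} [Fintype n] (A : Matrix n n ℂ) (c : n → ℂ) :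
    dotProduct (star c) (A *ᵥ c) = (A * vecMulVec c (star c)).trace := by
  simp only [dotProduct, mulVec, vecMulVec, trace_mul_fml, Matrix.of_apply, Pi.star_apply]
  refine Finset.sum_congr rfl fun a _ => ?_
  rw [Finset.mul_sum]
  exact Finset.sum_congr rfl fun b _ => by ring

lemma tensor_trace_nonneg {d L : ℕ} {P : Matrix (Fin L → Fin d) (Fin L → Fin d) ℂ}
    (hP : P.PosSemidef) {K : Fin L → Matrix (Fin d) (Fin d) ℂ}
    (hK : ∀ l, (K l).PosSemidef) : 0 ≤ (P * tensorPow K).trace := by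
  choose B hB using fun l => posSemidef_iff_eq_transpose_mul_self.mp (hK l)
  set v : (Fin L → Fin d) → (Fin L → Fin d) → ℂ := fun w z =>
    ∏ l, star (B l (w l) (z l)) with hv
  have hexp : (P * tensorPow K).trace
      = ∑ w : Fin L → Fin d, dotProduct (star (v w)) (P *ᵥ (v w)) := by
    rw [trace_mul_fml]
    have hK' : ∀ (l : Fin L) (p q : Fin d), K l p q = ∑ k, star (B l k p) * B l k q := by
      intro l p q
      rw [hB l, Matrix.mul_apply]
      exact Finset.sum_congr rfl fun k _ => by rw [conjTranspose_apply]
    calc ∑ x, ∑ y, P x y * tensorPow K y x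
        = ∑ x, ∑ y, P x y * ∏ l, ∑ k, star (B l k (y l)) * B l k (x l) := by
          refine Finset.sum_congr rfl fun x _ => Finset.sum_congr rfl fun y _ => ?_
          rw [show tensorPow K y x = ∏ l, K l (y l) (x l) from rfl]
          congr 1
          exact Finset.prod_congr rfl fun l _ => hK' l (y l) (x l)
      _ = ∑ x, ∑ y, ∑ w : Fin L → Fin d, P x y *
            ∏ l, (star (B l (w l) (y l)) * B l (w l) (x l)) := by
          refine Finset.sum_congr rfl fun x _ => Finset.sum_congr rfl fun y _ => ?_
          rw [Finset.prod_univ_sum, Fintype.piFinset_univ, Finset.mul_sum]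
      _ = ∑ w : Fin L → Fin d, ∑ x, ∑ y, P x y *
            ∏ l, (star (B l (w l) (y l)) * B l (w l) (x l)) := by
          rw [show (∑ x : Fin L → Fin d, ∑ y : Fin L → Fin d, ∑ w : Fin L → Fin d,
              P x y * ∏ l, (star (B l (w l) (y l)) * B l (w l) (x l)))
              = ∑ x : Fin L → Fin d, ∑ w : Fin L → Fin d, ∑ y : Fin L → Fin d,
              P x y * ∏ l, (star (B l (w l) (y l)) * B l (w l) (x l)) from
            Finset.sum_congr rfl fun x _ => Finset.sum_comm]
          exact Finset.sum_comm
      _ = ∑ w : Fin L → Fin d, dotProduct (star (v w)) (P *ᵥ (v w)) := by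
          refine Finset.sum_congr rfl fun w _ => ?_
          simp only [dotProduct, mulVec, Pi.star_apply, hv, star_prod, star_star,
            Finset.mul_sum]
          refine Finset.sum_congr rfl fun x _ => Finset.sum_congr rfl fun y _ => ?_
          rw [Finset.prod_mul_distrib]
          ring
  rw [hexp]
  exact Finset.sum_nonneg fun w _ => hP.dotProduct_mulVec_nonneg (v w)

lemma contract_psd {d L : ℕ} {P : Matrix (Fin L → Fin d) (Fin L → Fin d) ℂ}
    (hP : P.PosSemidef) {N : Fin L → Matrix (Fin d) (Fin d) ℂ}
    (hN : ∀ l, (N l).PosSemidef) (l0 : Fin L) : (contract P N l0).PosSemidef := by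
  refine Matrix.PosSemidef.of_dotProduct_mulVec_nonneg ?_ ?_
  · show (contract P N l0)ᴴ = contract P N l0
    ext a b
    rw [conjTranspose_apply]
    show star (∑ x : Fin L → Fin d, ∑ y : Fin L → Fin d,
        P (Function.update x l0 b) (Function.update y l0 a)
          * ∏ l ∈ Finset.univ.erase l0, N l (y l) (x l))
      = ∑ x : Fin L → Fin d, ∑ y : Fin L → Fin d,
        P (Function.update x l0 a) (Function.update y l0 b)
          * ∏ l ∈ Finset.univ.erase l0, N l (y l) (x l)
    rw [star_sum]
    rw [Finset.sum_comm]
    refine Finset.sum_congr rfl fun x _ => ?_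
    rw [star_sum]
    refine Finset.sum_congr rfl fun y _ => ?_
    rw [star_mul', star_prod]
    rw [(hP.1).apply, Finset.prod_congr rfl (fun l _ => (hN l).1.apply _ _)]
  · intro c
    rw [quad_eq_trace, trace_contract_mul]
    have hupd : ∀ l, ((Function.update N l0 (vecMulVec c (star c))) l).PosSemidef := by
      intro l
      by_cases hl : l = l0
      · subst hl; rw [Function.update_self]; exact vecMulVec_star_psd c
      · rw [Function.update_of_ne hl]; exact hN l
    have hd2 : (0 : ℂ) ≤ (d : ℂ) ^ 2 := by
      have : (0 : ℂ) ≤ (d : ℂ) := by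
        rw [Complex.le_def]; simp
      exact pow_nonneg this 2
    exact mul_nonneg hd2 (tensor_trace_nonneg hP hupd)

lemma contract_sum {d L : ℕ} {m : ℕ} (P : Fin m → Matrix (Fin L → Fin d) (Fin L → Fin d) ℂ)
    (N : Fin L → Matrix (Fin d) (Fin d) ℂ) (l0 : Fin L) :
    ∑ i, contract (P i) N l0 = contract (∑ i, P i) N l0 := by
  ext a b
  simp only [Matrix.sum_apply, contract, Matrix.of_apply, Finset.sum_mul]
  rw [Finset.sum_comm]
  exact Finset.sum_congr rfl fun x _ => Finset.sum_comm

lemma contract_one {d L : ℕ} (N : Fin L → Matrix (Fin d) (Fin d) ℂ) (l0 : Fin L) :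
    contract (1 : Matrix (Fin L → Fin d) (Fin L → Fin d) ℂ) N l0
      = ((d : ℂ) ^ 2 * ∏ l ∈ Finset.univ.erase l0, (N l).trace) • 1 := by
  ext a b
  show (∑ x : Fin L → Fin d, ∑ y : Fin L → Fin d,
      (1 : Matrix (Fin L → Fin d) (Fin L → Fin d) ℂ)
        (Function.update x l0 a) (Function.update y l0 b)
        * ∏ l ∈ Finset.univ.erase l0, N l (y l) (x l)) = _
  have hone : ∀ (x y : Fin L → Fin d),
      (1 : Matrix (Fin L → Fin d) (Fin L → Fin d) ℂ)
        (Function.update x l0 a) (Function.update y l0 b)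
      = (1 : Matrix (Fin d) (Fin d) ℂ) a b
        * ∏ l ∈ Finset.univ.erase l0, (1 : Matrix (Fin d) (Fin d) ℂ) (x l) (y l) := by
    intro x y
    rw [← tensorPow_one (d := d) (L := L)]
    show (∏ l, (1 : Matrix (Fin d) (Fin d) ℂ)
        ((Function.update x l0 a) l) ((Function.update y l0 b) l)) = _
    rw [← Finset.mul_prod_erase Finset.univ _ (Finset.mem_univ l0)]
    rw [Function.update_self, Function.update_self]
    congr 1
    exact Finset.prod_congr rfl fun l hl => by
      have hne := Finset.ne_of_mem_erase hl
      rw [Function.update_of_ne hne, Function.update_of_ne hne]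
  calc (∑ x : Fin L → Fin d, ∑ y : Fin L → Fin d,
      (1 : Matrix (Fin L → Fin d) (Fin L → Fin d) ℂ)
        (Function.update x l0 a) (Function.update y l0 b)
        * ∏ l ∈ Finset.univ.erase l0, N l (y l) (x l))
      = (1 : Matrix (Fin d) (Fin d) ℂ) a b * ∑ x : Fin L → Fin d, ∑ y : Fin L → Fin d,
          ∏ l ∈ Finset.univ.erase l0,
            ((1 : Matrix (Fin d) (Fin d) ℂ) (x l) (y l) * N l (y l) (x l)) := by
        rw [Finset.mul_sum]
        refine Finset.sum_congr rfl fun x _ => ?_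
        rw [Finset.mul_sum]
        refine Finset.sum_congr rfl fun y _ => ?_
        rw [hone x y, Finset.prod_mul_distrib]
        ring
    _ = (1 : Matrix (Fin d) (Fin d) ℂ) a b * ((d : ℂ) * ∑ x : Fin L → Fin d,
          ∏ l ∈ Finset.univ.erase l0, N l (x l) (x l)) := by
        congr 1
        calc ∑ x : Fin L → Fin d, ∑ y : Fin L → Fin d, ∏ l ∈ Finset.univ.erase l0,
              ((1 : Matrix (Fin d) (Fin d) ℂ) (x l) (y l) * N l (y l) (x l))
            = ∑ x : Fin L → Fin d, (d : ℂ) * ∏ l ∈ Finset.univ.erase l0, N l (x l) (x l) := by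
              refine Finset.sum_congr rfl fun x _ => ?_
              rw [sum_prod_erase l0
                (fun l q => (1 : Matrix (Fin d) (Fin d) ℂ) (x l) q * N l q (x l))]
              congr 1
              refine Finset.prod_congr rfl fun l _ => ?_
              simp [Matrix.one_apply, Finset.sum_ite_eq, ite_mul]
          _ = (d : ℂ) * ∑ x : Fin L → Fin d, ∏ l ∈ Finset.univ.erase l0, N l (x l) (x l) := by
              rw [Finset.mul_sum]
    _ = ((d : ℂ) ^ 2 * ∏ l ∈ Finset.univ.erase l0, (N l).trace) • (1 : Matrix (Fin d) (Fin d) ℂ) a b := by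
        rw [sum_prod_erase l0 (fun l p => N l p p)]
        show _ = ((d : ℂ) ^ 2 * ∏ l ∈ Finset.univ.erase l0, (N l).trace)
          * (1 : Matrix (Fin d) (Fin d) ℂ) a b
        simp only [Matrix.trace, Matrix.diag]
        ring

lemma psd_trace_zero {n : Type*} [Fintype n] [DecidableEq n] {M : Matrix n n ℂ}
    (hM : M.PosSemidef) (h : M.trace = 0) : M = 0 := by
  obtain ⟨B, rfl⟩ := posSemidef_iff_eq_transpose_mul_self.mp hM
  have hB : B = 0 := by
    have h' : ∑ p, ∑ k, star (B k p) * B k p = 0 := by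
      rw [← h]
      simp [Matrix.trace, Matrix.diag, Matrix.mul_apply, conjTranspose_apply]
    have hterm : ∀ p ∈ (Finset.univ : Finset n), 0 ≤ ∑ k, star (B k p) * B k p :=
      fun p _ => Finset.sum_nonneg fun k _ => star_mul_self_nonneg _
    have hzero := (Finset.sum_eq_zero_iff_of_nonneg hterm).mp h'
    ext k p
    have := (Finset.sum_eq_zero_iff_of_nonneg
      (fun k _ => star_mul_self_nonneg (B k p))).mp (hzero p (Finset.mem_univ p)) k
      (Finset.mem_univ k)
    rcases mul_eq_zero.mp this with h | h
    · simpa using star_eq_zero.mp h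
    · simpa using h
  rw [hB]
  simp

lemma psd_sum {n : Type*} [Fintype n] {ι : Type*} (s : Finset ι) (f : ι → Matrix n n ℂ)
    (hf : ∀ i ∈ s, (f i).PosSemidef) : (∑ i ∈ s, f i).PosSemidef := by
  classical
  induction s using Finset.induction_on with
  | empty => simpa using Matrix.PosSemidef.zero
  | insert _ _ hnot ih =>
    rw [Finset.sum_insert hnot]
    exact Matrix.PosSemidef.add (hf _ (Finset.mem_insert_self _ _))
      (ih fun i hi => hf i (Finset.mem_insert_of_mem hi))

/-- single-system constancy: for any POVM element, the unnormalized posterior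
is constant in θ -/
lemma key_const {d : ℕ} (ρ0 : ZMod 8 → Matrix (Fin d) (Fin d) ℂ)
    (hρ0 : ∀ k, (ρ0 k).PosSemidef)
    (hb : ∀ (m : ℕ) (Pov : Fin m → Matrix (Fin d) (Fin d) ℂ),
      (∀ i, (Pov i).PosSemidef) → (∑ i, Pov i) = 1 →
      ∀ (θ φ : ZMod 8) (i : Fin m),
        (∑ θ' : ZMod 8, ∑ r : ZMod 2, (Pov i * ρ0 (φ - θ' - pad r)).trace) ≠ 0 →
        (∑ r : ZMod 2, (Pov i * ρ0 (φ - θ - pad r)).trace) /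
          (∑ θ' : ZMod 8, ∑ r : ZMod 2, (Pov i * ρ0 (φ - θ' - pad r)).trace) = 1 / 8)
    (m' : ℕ) (F : Fin m' → Matrix (Fin d) (Fin d) ℂ)
    (hFpos : ∀ i, (F i).PosSemidef) (hFsum : (∑ i, F i) = 1)
    (φ0 : ZMod 8) (i : Fin m') (t t' : ZMod 8) :
    ∑ s : ZMod 2, (F i * ρ0 (φ0 - t - pad s)).trace
      = ∑ s : ZMod 2, (F i * ρ0 (φ0 - t' - pad s)).trace := by
  set g : ZMod 8 → ℂ := fun u => ∑ s, (F i * ρ0 (φ0 - u - pad s)).trace with hg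
  by_cases hden : (∑ u : ZMod 8, g u) = 0
  · have hnn : ∀ u ∈ (Finset.univ : Finset (ZMod 8)), 0 ≤ g u := fun u _ =>
      Finset.sum_nonneg fun s _ => trace_mul_nonneg (hFpos i) (hρ0 _)
    have hz := (Finset.sum_eq_zero_iff_of_nonneg hnn).mp hden
    rw [show (∑ s : ZMod 2, (F i * ρ0 (φ0 - t - pad s)).trace) = g t from rfl,
      show (∑ s : ZMod 2, (F i * ρ0 (φ0 - t' - pad s)).trace) = g t' from rfl,
      hz t (Finset.mem_univ t), hz t' (Finset.mem_univ t')]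
  · have h1 := hb m' F hFpos hFsum t φ0 i hden
    have h2 := hb m' F hFpos hFsum t' φ0 i hden
    have e1 : g t = (1 / 8) * ∑ u : ZMod 8, g u := by
      rw [← h1]; exact (div_mul_cancel₀ _ hden).symm
    have e2 : g t' = (1 / 8) * ∑ u : ZMod 8, g u := by
      rw [← h2]; exact (div_mul_cancel₀ _ hden).symm
    rw [show (∑ s : ZMod 2, (F i * ρ0 (φ0 - t - pad s)).trace) = g t from rfl,
      show (∑ s : ZMod 2, (F i * ρ0 (φ0 - t' - pad s)).trace) = g t' from rfl, e1, e2]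

/-- **Lemma 2, composition of blindness under global POVMs.** If each single
system `ρ_l` is blind for every local POVM, then the joint system `⊗_l ρ_l` is blind for every
global POVM, with posterior `1/8^L`. -/
theorem statement5 (d L : ℕ) (hd : 1 ≤ d) (hL : 1 ≤ L)
    (ρ : Fin L → ZMod 8 → Matrix (Fin d) (Fin d) ℂ)
    (hρ : ∀ l k, (ρ l k).PosSemidef)
    (hblind : ∀ (l : Fin L) (m : ℕ) (Pov : Fin m → Matrix (Fin d) (Fin d) ℂ),
      (∀ i, (Pov i).PosSemidef) → (∑ i, Pov i) = 1 →
      ∀ (θ φ : ZMod 8) (i : Fin m),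
        (∑ θ' : ZMod 8, ∑ r : ZMod 2, (Pov i * ρ l (φ - θ' - pad r)).trace) ≠ 0 →
        (∑ r : ZMod 2, (Pov i * ρ l (φ - θ - pad r)).trace) /
          (∑ θ' : ZMod 8, ∑ r : ZMod 2, (Pov i * ρ l (φ - θ' - pad r)).trace) = 1 / 8)
    (m : ℕ) (Pov : Fin m → Matrix (Fin L → Fin d) (Fin L → Fin d) ℂ)
    (hpos : ∀ j, (Pov j).PosSemidef) (hsum : (∑ j, Pov j) = 1)
    (θ φ : Fin L → ZMod 8) (j : Fin m)
    (hden : (∑ θ' : Fin L → ZMod 8, ∑ r : Fin L → ZMod 2,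
        (Pov j * tensorPow fun l => ρ l (φ l - θ' l - pad (r l))).trace) ≠ 0) :
    (∑ r : Fin L → ZMod 2, (Pov j * tensorPow fun l => ρ l (φ l - θ l - pad (r l))).trace) /
      (∑ θ' : Fin L → ZMod 8, ∑ r : Fin L → ZMod 2,
        (Pov j * tensorPow fun l => ρ l (φ l - θ' l - pad (r l))).trace) = 1 / 8 ^ L := by
  classical
  set σ : Fin L → ZMod 8 → Matrix (Fin d) (Fin d) ℂ :=
    fun l u => ∑ s : ZMod 2, ρ l (φ l - u - pad s) with hσdef
  have hσpsd : ∀ l u, (σ l u).PosSemidef := fun l u =>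
    psd_sum _ _ fun s _ => hρ l _
  set G : (Fin L → ZMod 8) → ℂ :=
    fun θ' => (Pov j * tensorPow fun l => σ l (θ' l)).trace with hGdef
  have hstep1 : ∀ θ' : Fin L → ZMod 8,
      (∑ r : Fin L → ZMod 2,
        (Pov j * tensorPow fun l => ρ l (φ l - θ' l - pad (r l))).trace) = G θ' := by
    intro θ'
    rw [hGdef]
    dsimp only
    rw [show (tensorPow fun l => σ l (θ' l))
        = ∑ r : Fin L → ZMod 2, tensorPow (fun l => ρ l (φ l - θ' l - pad (r l))) from
      (tensorPow_sum (fun l s => ρ l (φ l - θ' l - pad s))).symm]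
    rw [Finset.mul_sum, trace_sum]
  have hupdate : ∀ (θ₁ : Fin L → ZMod 8) (l0 : Fin L) (t : ZMod 8),
      G (Function.update θ₁ l0 t) = G θ₁ := by
    intro θ₁ l0 t
    set N : Fin L → Matrix (Fin d) (Fin d) ℂ := fun l => σ l (θ₁ l) with hN
    have hNpsd : ∀ l, (N l).PosSemidef := fun l => hσpsd l (θ₁ l)
    have htens : ∀ u : ZMod 8,
        (fun l => σ l ((Function.update θ₁ l0 u) l)) = Function.update N l0 (σ l0 u) := by
      intro u; funext l
      by_cases hl : l = l0
      · subst hl; rw [Function.update_self, Function.update_self]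
      · rw [Function.update_of_ne hl, Function.update_of_ne hl]
    have hd2 : ((d : ℂ) ^ 2) ≠ 0 := pow_ne_zero 2 (Nat.cast_ne_zero.mpr (by omega))
    have main : ∀ u u' : ZMod 8,
        (Pov j * tensorPow (Function.update N l0 (σ l0 u))).trace
        = (Pov j * tensorPow (Function.update N l0 (σ l0 u'))).trace := by
      intro u u'
      apply mul_left_cancel₀ hd2
      rw [← trace_contract_mul, ← trace_contract_mul]
      set A := contract (Pov j) N l0 with hA
      have hexp : ∀ v : ZMod 8, (A * σ l0 v).trace
          = ∑ s : ZMod 2, (A * ρ l0 (φ l0 - v - pad s)).trace := by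
        intro v
        rw [hσdef]
        dsimp only
        rw [Finset.mul_sum, trace_sum]
      rw [hexp, hexp]
      set T := ∏ l ∈ Finset.univ.erase l0, (N l).trace with hT
      by_cases hT0 : T = 0
      · obtain ⟨l1, hl1mem, hl1⟩ := Finset.prod_eq_zero_iff.mp hT0
        have hN1 : N l1 = 0 := psd_trace_zero (hNpsd l1) hl1
        have hA0 : A = 0 := by
          rw [hA]
          ext a b
          show (∑ x : Fin L → Fin d, ∑ y : Fin L → Fin d,
            Pov j (Function.update x l0 a) (Function.update y l0 b)
              * ∏ l ∈ Finset.univ.erase l0, N l (y l) (x l)) = 0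
          refine Finset.sum_eq_zero fun x _ => Finset.sum_eq_zero fun y _ => ?_
          rw [Finset.prod_eq_zero hl1mem (by rw [hN1]; simp), mul_zero]
        rw [hA0]
        simp
      · have hTnn : (0 : ℂ) ≤ T := Finset.prod_nonneg fun l _ => psd_trace_nonneg (hNpsd l)
        have hdTnn : (0 : ℂ) ≤ (d : ℂ) ^ 2 * T := by
          refine mul_nonneg (pow_nonneg ?_ 2) hTnn
          rw [Complex.le_def]; simp
        have hdTne : (d : ℂ) ^ 2 * T ≠ 0 := mul_ne_zero hd2 hT0
        set c : ℂ := ((d : ℂ) ^ 2 * T)⁻¹ with hc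
        have hcpos : (0 : ℂ) ≤ c := by
          rw [hc]
          rw [Complex.le_def] at hdTnn ⊢
          obtain ⟨h1, h2⟩ := hdTnn
          rw [show ((d : ℂ) ^ 2 * T) = ((((d : ℂ) ^ 2 * T).re : ℝ) : ℂ) from
            Complex.ext (by simp) (by simp [← h2])]
          rw [← Complex.ofReal_inv]
          simp only [Complex.ofReal_re, Complex.ofReal_im, Complex.zero_re, Complex.zero_im]
          exact ⟨inv_nonneg.mpr (by simpa using h1), trivial⟩
        set F : Fin m → Matrix (Fin d) (Fin d) ℂ := fun i => c • contract (Pov i) N l0 with hF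
        have hFpos : ∀ i, (F i).PosSemidef := fun i =>
          psd_smul hcpos (contract_psd (hpos i) hNpsd l0)
        have hFsum : (∑ i, F i) = 1 := by
          rw [hF]
          dsimp only
          rw [← Finset.smul_sum, contract_sum, hsum, contract_one, smul_smul, hc,
            inv_mul_cancel₀ hdTne, one_smul]
        have hkey := key_const (ρ l0) (hρ l0) (hblind l0) m F hFpos hFsum (φ l0) j u u'
        have hexp2 : ∀ v : ZMod 8,
            (∑ s : ZMod 2, (F j * ρ l0 (φ l0 - v - pad s)).trace)
            = c * ∑ s : ZMod 2, (A * ρ l0 (φ l0 - v - pad s)).trace := by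
          intro v
          rw [Finset.mul_sum]
          refine Finset.sum_congr rfl fun s _ => ?_
          rw [hF]
          dsimp only
          rw [hA, smul_mul_assoc, trace_smul, smul_eq_mul]
        rw [hexp2, hexp2] at hkey
        have hcne : c ≠ 0 := by rw [hc]; exact inv_ne_zero hdTne
        exact mul_left_cancel₀ hcne hkey
    have hback := htens (θ₁ l0)
    rw [Function.update_eq_self] at hback
    calc G (Function.update θ₁ l0 t)
        = (Pov j * tensorPow (Function.update N l0 (σ l0 t))).trace := by
          rw [hGdef]; dsimp only; rw [htens t]
      _ = (Pov j * tensorPow (Function.update N l0 (σ l0 (θ₁ l0)))).trace := main t (θ₁ l0)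
      _ = G θ₁ := by rw [hGdef]; dsimp only; rw [hback]
  have hconst : ∀ θ' : Fin L → ZMod 8, G θ' = G θ := by
    have haux : ∀ (s : Finset (Fin L)) (θa θb : Fin L → ZMod 8),
        (∀ l, l ∉ s → θa l = θb l) → G θa = G θb := by
      intro s
      induction s using Finset.induction_on with
      | empty =>
        intro θa θb h
        rw [show θa = θb from funext fun l => h l (Finset.notMem_empty l)]
      | insert a s ha ih =>
        intro θa θb h
        have h1 : G θa = G (Function.update θa a (θb a)) := (hupdate θa a (θb a)).symm
        have h2 : G (Function.update θa a (θb a)) = G θb := by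
          apply ih
          intro l hl
          by_cases hla : l = a
          · subst hla; rw [Function.update_self]
          · rw [Function.update_of_ne hla]
            exact h l (by simp [Finset.mem_insert, hla, hl])
        rw [h1, h2]
    exact fun θ' => haux Finset.univ θ' θ (fun l hl => absurd (Finset.mem_univ l) hl)
  have hdenval : (∑ θ' : Fin L → ZMod 8, ∑ r : Fin L → ZMod 2,
      (Pov j * tensorPow fun l => ρ l (φ l - θ' l - pad (r l))).trace)
      = (8 : ℂ) ^ L * G θ := by
    calc (∑ θ' : Fin L → ZMod 8, ∑ r : Fin L → ZMod 2,
        (Pov j * tensorPow fun l => ρ l (φ l - θ' l - pad (r l))).trace)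
        = ∑ θ' : Fin L → ZMod 8, G θ' := Finset.sum_congr rfl fun θ' _ => hstep1 θ'
      _ = ∑ _θ' : Fin L → ZMod 8, G θ := Finset.sum_congr rfl fun θ' _ => hconst θ'
      _ = (Fintype.card (Fin L → ZMod 8) : ℂ) * G θ := by
          rw [Finset.sum_const, Finset.card_univ, nsmul_eq_mul]
      _ = (8 : ℂ) ^ L * G θ := by
          congr 1
          rw [Fintype.card_fun]
          push_cast
          simp
  have hGne : G θ ≠ 0 := by
    intro h0
    exact hden (by rw [hdenval, h0, mul_zero])
  rw [hstep1 θ, hdenval]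
  have h8 : ((8 : ℂ) ^ L) ≠ 0 := pow_ne_zero L (by norm_num)
  rw [div_eq_div_iff (mul_ne_zero h8 hGne) h8]
  ring

end
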